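/- The symmetric order equals 4: the system of symmetric polynomial equalities together with the polynomial inequality admits non-trivial real solutions for r = 3 but no non-trivial real solutions for r = 4. -/
import Mathlib


open Finset

/-- Index set of the first sum of the symmetric system: quadruples `(α₁, α₂, β₁, β₂)` with
`α₁ + β₁ + 2α₂ + 2β₂ = ℓ`, `1 ≤ α₁ + α₂ ≤ r`, and `β₁ + β₂ ≤ r - (α₁ + α₂)`. -/
def symIdx1 (r ℓ : ℕ) : Finset (ℕ × ℕ × ℕ × ℕ) :=
  ((Finset.range (ℓ + 1)) ×ˢ (Finset.range (ℓ + 1)) ×ˢ (Finset.range (ℓ + 1)) ×ˢ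
      (Finset.range (ℓ + 1))).filter
    (fun q => q.1 + q.2.2.1 + 2 * q.2.1 + 2 * q.2.2.2 = ℓ ∧ 1 ≤ q.1 + q.2.1 ∧
      q.1 + q.2.1 ≤ r ∧ q.2.2.1 + q.2.2.2 ≤ r - (q.1 + q.2.1))

/-- Index set of the second sum: pairs `(α₁, α₂)` with `α₁ + 2α₂ = ℓ`, `1 ≤ α₁ + α₂ ≤ r`. -/
def symIdx2 (r ℓ : ℕ) : Finset (ℕ × ℕ) :=
  ((Finset.range (ℓ + 1)) ×ˢ (Finset.range (ℓ + 1))).filter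
    (fun p => p.1 + 2 * p.2 = ℓ ∧ 1 ≤ p.1 + p.2 ∧ p.1 + p.2 ≤ r)

/-- Left-hand side of the `ℓ`-th equation of the symmetric system of order `r`. -/
noncomputable def symLHS (r ℓ : ℕ) (x₁ x₂ y₁ y₂ y₃ : ℝ) : ℝ :=
  (∑ q ∈ symIdx1 r ℓ,
      2 ^ q.2.2.1 * (-x₁) ^ q.1 * x₂ ^ q.2.2.1 * y₂ ^ q.2.1 * y₃ ^ q.2.2.2 /
        (2 ^ (q.2.1 + q.2.2.2) * (Nat.factorial q.1 : ℝ) * (Nat.factorial q.2.1 : ℝ) *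
          (Nat.factorial q.2.2.1 : ℝ) * (Nat.factorial q.2.2.2 : ℝ)))
    + ∑ p ∈ symIdx2 r ℓ,
        x₁ ^ p.1 * y₁ ^ p.2 / (2 ^ p.2 * (Nat.factorial p.1 : ℝ) * (Nat.factorial p.2 : ℝ))

/-- `(x₁, x₂, y₁, y₂, y₃)` solves the equalities of the symmetric system of order `r`. -/
def symSolEq (r : ℕ) (x₁ x₂ y₁ y₂ y₃ : ℝ) : Prop :=
  ∀ ℓ ∈ Finset.Icc 1 r, symLHS r ℓ x₁ x₂ y₁ y₂ y₃ = 0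

/-- The polynomial inequality of the symmetric system of order `r`:
`|x₁|^r + |y₁|^{r/2} + |y₂|^{r/2} ≤ |2x₂-x₁|^r + |y₃-y₁|^{r/2} + |y₂+y₃|^{r/2}`. -/
noncomputable def symIneq (r : ℕ) (x₁ x₂ y₁ y₂ y₃ : ℝ) : Prop :=
  |x₁| ^ (r : ℝ) + |y₁| ^ ((r : ℝ) / 2) + |y₂| ^ ((r : ℝ) / 2) ≤
    |2 * x₂ - x₁| ^ (r : ℝ) + |y₃ - y₁| ^ ((r : ℝ) / 2) + |y₂ + y₃| ^ ((r : ℝ) / 2)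

/-- A solution is non-trivial if at least one of `x₁, y₁, y₂` is nonzero. -/
def nontrivSol (x₁ y₁ y₂ : ℝ) : Prop := x₁ ≠ 0 ∨ y₁ ≠ 0 ∨ y₂ ≠ 0

/-- The symmetric order `r̄_sym`: the smallest `r ≥ 1` such that the symmetric system
(equalities together with the inequality) of order `r` has no non-trivial real solution. -/
noncomputable def symOrder : ℕ :=
  sInf {r : ℕ | 1 ≤ r ∧ ¬ ∃ x₁ x₂ y₁ y₂ y₃ : ℝ,
    nontrivSol x₁ y₁ y₂ ∧ symSolEq r x₁ x₂ y₁ y₂ y₃ ∧ symIneq r x₁ x₂ y₁ y₂ y₃}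


section Aux

/-! ### Evaluation lemmas for `symLHS` -/

set_option maxHeartbeats 1000000 in
private lemma symLHS_four_two (x₁ x₂ y₁ y₂ y₃ : ℝ) : symLHS 4 2 x₁ x₂ y₁ y₂ y₃ =
    x₁^2 - 2*x₁*x₂ + y₁/2 + y₂/2 := by
  rw [symLHS, show symIdx1 4 2 = {(0,1,0,0), (1,0,1,0), (2,0,0,0)} from by decide,
    show symIdx2 4 2 = {(0,1), (2,0)} from by decide]
  simp (config := { decide := true }) only [Finset.sum_insert, Finset.mem_insert,
    Finset.mem_singleton, Finset.sum_singleton]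
  norm_num [Nat.factorial]
  ring

set_option maxHeartbeats 1000000 in
private lemma symLHS_four_three (x₁ x₂ y₁ y₂ y₃ : ℝ) : symLHS 4 3 x₁ x₂ y₁ y₂ y₃ =
    x₂*y₂ - x₁*y₃/2 - x₁*y₂/2 + x₁*y₁/2 - 2*x₁*x₂^2 + x₁^2*x₂ := by
  rw [symLHS, show symIdx1 4 3 = {(0,1,1,0), (1,0,0,1), (1,0,2,0), (1,1,0,0), (2,0,1,0), (3,0,0,0)} from by decide,
    show symIdx2 4 3 = {(1,1), (3,0)} from by decide]
  simp (config := { decide := true }) only [Finset.sum_insert, Finset.mem_insert,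
    Finset.mem_singleton, Finset.sum_singleton]
  norm_num [Nat.factorial]
  ring

set_option maxHeartbeats 1000000 in
private lemma symLHS_four_four (x₁ x₂ y₁ y₂ y₃ : ℝ) : symLHS 4 4 x₁ x₂ y₁ y₂ y₃ =
    y₂*y₃/4 + y₂^2/8 + y₁^2/8 + x₂^2*y₂ - x₁*x₂*y₃ - x₁*x₂*y₂ - (4/3)*x₁*x₂^3
      + x₁^2*y₃/4 + x₁^2*y₂/4 + x₁^2*y₁/4 + x₁^2*x₂^2 - x₁^3*x₂/3 + x₁^4/12 := by
  rw [symLHS, show symIdx1 4 4 = {(0,1,0,1), (0,1,2,0), (0,2,0,0), (1,0,1,1), (1,0,3,0), (1,1,1,0), (2,0,0,1), (2,0,2,0), (2,1,0,0), (3,0,1,0), (4,0,0,0)} from by decide,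
    show symIdx2 4 4 = {(0,2), (2,1), (4,0)} from by decide]
  simp (config := { decide := true }) only [Finset.sum_insert, Finset.mem_insert,
    Finset.mem_singleton, Finset.sum_singleton]
  norm_num [Nat.factorial]
  ring

set_option maxHeartbeats 1000000 in
private lemma symLHS_pt (r ℓ : ℕ) (h1 : symIdx1 r ℓ = symIdx1 3 ℓ)
    (h2 : symIdx2 r ℓ = symIdx2 3 ℓ) (hl : ℓ ∈ Finset.Icc 1 3) :
    symLHS r ℓ 1 1 1 1 0 = 0 := by
  rw [symLHS, h1, h2]
  fin_cases hl
  · rw [show symIdx1 3 1 = {(1,0,0,0)} from by decide,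
      show symIdx2 3 1 = {(1,0)} from by decide]
    norm_num
  · rw [show symIdx1 3 2 = {(0,1,0,0), (1,0,1,0), (2,0,0,0)} from by decide,
      show symIdx2 3 2 = {(0,1), (2,0)} from by decide]
    simp (config := { decide := true }) only [Finset.sum_insert, Finset.mem_insert,
      Finset.mem_singleton, Finset.sum_singleton]
    norm_num [Nat.factorial]
  · rw [show symIdx1 3 3 = {(0,1,1,0), (1,0,0,1), (1,0,2,0), (1,1,0,0), (2,0,1,0), (3,0,0,0)} from by decide,
      show symIdx2 3 3 = {(1,1), (3,0)} from by decide]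
    simp (config := { decide := true }) only [Finset.sum_insert, Finset.mem_insert,
      Finset.mem_singleton, Finset.sum_singleton]
    norm_num [Nat.factorial]

/-- The common witness works for orders `r = 1, 2, 3`. -/
private lemma exists_sol (r : ℕ) (hr : r ∈ Finset.Icc 1 3) :
    ∃ x₁ x₂ y₁ y₂ y₃ : ℝ,
      nontrivSol x₁ y₁ y₂ ∧ symSolEq r x₁ x₂ y₁ y₂ y₃ ∧ symIneq r x₁ x₂ y₁ y₂ y₃ := by
  refine ⟨1, 1, 1, 1, 0, Or.inl one_ne_zero, ?_, ?_⟩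
  · intro ℓ hl
    simp only [Finset.mem_Icc] at hl hr
    obtain ⟨hr1, hr3⟩ := hr
    obtain ⟨hl1, hl2⟩ := hl
    apply symLHS_pt r ℓ ?_ ?_ (Finset.mem_Icc.mpr ⟨hl1, hl2.trans hr3⟩)
    · interval_cases r <;> interval_cases ℓ <;> decide
    · interval_cases r <;> interval_cases ℓ <;> decide
  · rw [symIneq]
    norm_num [Real.one_rpow]

private lemma rpow_four (a : ℝ) : |a| ^ ((4:ℕ) : ℝ) = (a^2)^2 := by
  rw [Real.rpow_natCast, show (|a|)^(4:ℕ) = (|a|^2)^2 by ring, sq_abs]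

private lemma rpow_half_four (a : ℝ) : |a| ^ (((4:ℕ) : ℝ)/2) = a^2 := by
  rw [show ((4:ℕ):ℝ)/2 = ((2:ℕ):ℝ) by norm_num, Real.rpow_natCast, sq_abs]

/-- No non-trivial solution of order 4. -/
private lemma no_sol_four : ¬ ∃ x₁ x₂ y₁ y₂ y₃ : ℝ,
    nontrivSol x₁ y₁ y₂ ∧ symSolEq 4 x₁ x₂ y₁ y₂ y₃ ∧ symIneq 4 x₁ x₂ y₁ y₂ y₃ := by
  rintro ⟨x₁, x₂, y₁, y₂, y₃, hnt, heq, hineq⟩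
  have e2 : x₁^2 - 2*x₁*x₂ + y₁/2 + y₂/2 = 0 := by
    have h := heq 2 (by decide); rwa [symLHS_four_two] at h
  have e3 : x₂*y₂ - x₁*y₃/2 - x₁*y₂/2 + x₁*y₁/2 - 2*x₁*x₂^2 + x₁^2*x₂ = 0 := by
    have h := heq 3 (by decide); rwa [symLHS_four_three] at h
  have e4 : y₂*y₃/4 + y₂^2/8 + y₁^2/8 + x₂^2*y₂ - x₁*x₂*y₃ - x₁*x₂*y₂ - (4/3)*x₁*x₂^3
      + x₁^2*y₃/4 + x₁^2*y₂/4 + x₁^2*y₁/4 + x₁^2*x₂^2 - x₁^3*x₂/3 + x₁^4/12 = 0 := by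
    have h := heq 4 (by decide); rwa [symLHS_four_four] at h
  have hD : (x₁^2)^2 + y₁^2 + y₂^2 ≤ ((2*x₂ - x₁)^2)^2 + (y₃-y₁)^2 + (y₂+y₃)^2 := by
    have h := hineq
    rw [symIneq, rpow_four, rpow_four, rpow_half_four, rpow_half_four, rpow_half_four,
      rpow_half_four] at h
    exact h
  by_cases hx1 : x₁ = 0
  · subst hx1
    have hy1 : y₁ = -y₂ := by linear_combination 2*e2
    subst hy1
    have hy2 : y₂ ≠ 0 := by
      rcases hnt with h | h | h
      · exact absurd rfl h
      · intro h0; rw [h0, neg_zero] at h; exact h rfl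
      · exact h
    have hx2 : x₂ = 0 := by
      have h : x₂ * y₂ = 0 := by linear_combination e3
      exact (mul_eq_zero.mp h).resolve_right hy2
    subst hx2
    have hy3 : y₃ = -y₂ := by
      have h : y₂ * (y₃ + y₂) = 0 := by linear_combination 4*e4
      have h2 := (mul_eq_zero.mp h).resolve_left hy2
      linarith
    subst hy3
    have h0 : 0 < y₂^2 := by positivity
    nlinarith [hD]
  · have hy1 : y₁ = 4*x₁*x₂ - 2*x₁^2 - y₂ := by linear_combination 2*e2
    subst hy1
    have hy3 : x₁*y₃ = 2*x₂*y₂ - 2*x₁*y₂ + 6*x₁^2*x₂ - 2*x₁^3 - 4*x₁*x₂^2 := by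
      linear_combination -2*e3
    have hP : (x₂ - x₁/2) * (y₂^2/2 - 2*x₁*(x₂ - x₁/2)*y₂ + (8/3)*x₁^2*(x₂ - x₁/2)^2 + x₁^4/6)
        = 0 := by
      linear_combination x₁*e4 - (y₂/4 - x₁*x₂ + x₁^2/4)*hy3
    have hx14 : 0 < x₁^4 := by positivity
    have hG : 0 < y₂^2/2 - 2*x₁*(x₂ - x₁/2)*y₂ + (8/3)*x₁^2*(x₂ - x₁/2)^2 + x₁^4/6 := by
      nlinarith [sq_nonneg (y₂ - 2*x₁*(x₂ - x₁/2)), sq_nonneg (x₁*(x₂ - x₁/2))]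
    have ht : x₂ = x₁/2 := by
      rcases mul_eq_zero.mp hP with h | h
      · linarith
      · exact absurd h (ne_of_gt hG)
    subst ht
    have hy3' : y₃ = -y₂ := by
      have h : x₁ * y₃ = x₁ * (-y₂) := by linear_combination hy3
      exact mul_left_cancel₀ hx1 h
    subst hy3'
    nlinarith [hD]

end Aux

/-- The symmetric order equals 4: the symmetric system (equalities plus inequality) admits a
non-trivial real solution for `r = 3` but no non-trivial real solution for `r = 4`. -/
theorem sym_order_eq_four :
    (∃ x₁ x₂ y₁ y₂ y₃ : ℝ,
      nontrivSol x₁ y₁ y₂ ∧ symSolEq 3 x₁ x₂ y₁ y₂ y₃ ∧ symIneq 3 x₁ x₂ y₁ y₂ y₃) ∧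
    (¬ ∃ x₁ x₂ y₁ y₂ y₃ : ℝ,
      nontrivSol x₁ y₁ y₂ ∧ symSolEq 4 x₁ x₂ y₁ y₂ y₃ ∧ symIneq 4 x₁ x₂ y₁ y₂ y₃) ∧
    symOrder = 4 := by
  have h4 := no_sol_four
  refine ⟨exists_sol 3 (by decide), h4, ?_⟩
  have mem4 : 4 ∈ {r : ℕ | 1 ≤ r ∧ ¬ ∃ x₁ x₂ y₁ y₂ y₃ : ℝ,
      nontrivSol x₁ y₁ y₂ ∧ symSolEq r x₁ x₂ y₁ y₂ y₃ ∧ symIneq r x₁ x₂ y₁ y₂ y₃} :=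
    ⟨by norm_num, h4⟩
  refine le_antisymm (Nat.sInf_le mem4) (le_csInf ⟨4, mem4⟩ ?_)
  rintro r ⟨hr1, hr2⟩
  by_contra hlt
  push_neg at hlt
  exact hr2 (exists_sol r (Finset.mem_Icc.mpr ⟨hr1, by omega⟩))
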